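/- Let n ≥ 1, m ∈ ℕ ∪ {0}, 0 ≤ α < n, 0 < δ < 1 with mδ < n − α, α̃ = mδ + α, 1 ≤ r ≤ ∞, and let δ̃ < α̃ − n. If the pair of weights (v,w) belongs to H(r, α̃, δ̃), then either v = 0 almost everywhere in ℝⁿ or w = ∞ almost everywhere in ℝⁿ. -/

import Mathlib

open MeasureTheory Metric ENNReal NNReal

noncomputable section

/-- Euclidean space `ℝⁿ`. -/
abbrev E (n : ℕ) := EuclideanSpace ℝ (Fin n)

/-- `(∫ f^p dμ)^(1/p)` for finite `p`, and the essential supremum for `p = ∞`. -/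
noncomputable def eN {n : ℕ} (p : ℝ≥0∞) (f : E n → ℝ≥0∞) (μ : Measure (E n)) : ℝ≥0∞ :=
  if p = ∞ then essSup f μ else (∫⁻ y, f y ^ p.toReal ∂μ) ^ (1 / p.toReal)

/-- The two-weight class `H(r, αt, δt)` with constant `C`, where `r'` denotes the
conjugate exponent of `r` (so the `r = 1`, `r' = ∞` case is the essential supremum,
built into `eN`). -/
def Hclass (n : ℕ) (r' : ℝ≥0∞) (αt δ δt : ℝ) (v w : E n → ℝ≥0∞) (C : ℝ≥0∞) : Prop :=
  ∀ (c : E n) (R : ℝ), 0 < R →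
    essSup (fun y => (w y)⁻¹) (volume.restrict (ball c R)) *
        volume (ball c R) ^ ((δ - δt) / (n : ℝ)) *
        eN r' (fun y =>
          v y * (volume (ball c R) ^ ((1 : ℝ) / (n : ℝ)) +
            ENNReal.ofReal (dist c y)) ^ (-((n : ℝ) - αt + δ))) volume ≤ C

/-- The local condition (L) with constant `C`. -/
def LocalCond (n : ℕ) (r r' : ℝ≥0∞) (αt δt : ℝ) (v w : E n → ℝ≥0∞) (C : ℝ≥0∞) : Prop :=
  ∀ (c : E n) (R : ℝ), 0 < R →
    essSup (fun y => (w y)⁻¹) (volume.restrict (ball c R)) *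
        volume (ball c R) ^ ((αt - δt) / (n : ℝ) - r⁻¹.toReal) *
        eN r' v ((volume (ball c R))⁻¹ • volume.restrict (ball c R)) ≤ C

/-- The global condition (G) with constant `C`. -/
def GlobalCond (n : ℕ) (r' : ℝ≥0∞) (αt δ δt : ℝ) (v w : E n → ℝ≥0∞) (C : ℝ≥0∞) : Prop :=
  ∀ (c : E n) (R : ℝ), 0 < R →
    essSup (fun y => (w y)⁻¹) (volume.restrict (ball c R)) *
        volume (ball c R) ^ ((δ - δt) / (n : ℝ)) *
        eN r' (fun y => v y * (ENNReal.ofReal (dist c y)) ^ (-((n : ℝ) - αt + δ)))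
          (volume.restrict ((ball c R)ᶜ)) ≤ C

/-- `b ∈ Λ(δ)` with Lipschitz-`δ` constant `Cb`. -/
def LipDelta {n : ℕ} (δ Cb : ℝ) (b : E n → ℝ) : Prop :=
  ∀ x y : E n, |b x - b y| ≤ Cb * dist x y ^ δ

/-- The size condition `S*_α` with constant `A`. -/
def SizeCond (n : ℕ) (α A : ℝ) (K : E n → ℝ) : Prop :=
  ∀ x : E n, x ≠ 0 → |K x| ≤ A * ‖x‖ ^ (α - (n : ℝ))

/-- The smoothness condition `H*_{α,∞}` with exponent `γ` and constant `A`. -/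
def SmoothCond (n : ℕ) (α γ A : ℝ) (K : E n → ℝ) : Prop :=
  ∀ x x' y : E n, 2 * dist x x' ≤ dist x y →
    |K (x - y) - K (x' - y)| + |K (y - x) - K (y - x')| ≤
      A * dist x x' ^ γ / dist x y ^ ((n : ℝ) - α + γ)


lemma exists_ball_inter {n : ℕ} (S : Set (E n)) (hS : volume S ≠ 0) :
    ∃ k : ℕ, volume (S ∩ ball (0 : E n) k) ≠ 0 := by
  by_contra h
  push_neg at h
  apply hS
  have hsub : S ⊆ ⋃ k : ℕ, S ∩ ball (0 : E n) k := by
    intro x hx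
    obtain ⟨k, hk⟩ := exists_nat_gt ‖x‖
    exact Set.mem_iUnion.2 ⟨k, hx, by simpa [Metric.mem_ball, dist_zero_right] using hk⟩
  exact measure_mono_null hsub (measure_iUnion_null h)

lemma eN_pos {n : ℕ} (p : ℝ≥0∞) (hp : 1 ≤ p) (f : E n → ℝ≥0∞) (μ : Measure (E n))
    (hf : Measurable f) (h : ¬ f =ᵐ[μ] 0) : 0 < eN p f μ := by
  rw [pos_iff_ne_zero]
  unfold eN
  split_ifs with hptop
  · intro h0
    apply h
    filter_upwards [ae_le_essSup f] with y hy
    rw [h0] at hy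
    simpa using hy
  · have hpt : 0 < p.toReal :=
      ENNReal.toReal_pos (by intro h0; rw [h0] at hp; exact (by simp at hp)) hptop
    intro h0
    rw [ENNReal.rpow_eq_zero_iff] at h0
    have hI : (∫⁻ y, f y ^ p.toReal ∂μ) = 0 := by
      rcases h0 with ⟨h1, _⟩ | ⟨_, h2⟩
      · exact h1
      · exfalso; have : (0:ℝ) < 1 / p.toReal := by positivity
        linarith
    rw [lintegral_eq_zero_iff (hf.pow measurable_const)] at hI
    apply h
    filter_upwards [hI] with y hy
    simp only [Pi.zero_apply] at hy ⊢
    rw [ENNReal.rpow_eq_zero_iff] at hy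
    rcases hy with ⟨h1, _⟩ | ⟨h1, h2⟩
    · exact h1
    · exfalso; linarith
  
lemma eN_lower {n : ℕ} (p : ℝ≥0∞) (hp : 1 ≤ p) (K : ℝ≥0∞) (hK : K ≠ ∞)
    (f g : E n → ℝ≥0∞) (s : Set (E n)) (hs : MeasurableSet s) (hf : Measurable f)
    (h : ∀ y ∈ s, K * f y ≤ g y) :
    K * eN p f (volume.restrict s) ≤ eN p g volume := by
  unfold eN
  split_ifs with hptop
  · calc K * essSup f (volume.restrict s)
        = essSup (fun y => K * f y) (volume.restrict s) := ENNReal.essSup_const_mul.symm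
      _ ≤ essSup g (volume.restrict s) := by
          refine essSup_mono_ae ?_
          rw [Filter.EventuallyLE, ae_restrict_iff' hs]
          exact Filter.Eventually.of_forall h
      _ ≤ essSup g volume :=
          essSup_mono_measure (Measure.absolutelyContinuous_of_le Measure.restrict_le_self)
  · have hpt : 0 < p.toReal :=
      ENNReal.toReal_pos (by intro h0; rw [h0] at hp; exact (by simp at hp)) hptop
    calc K * (∫⁻ y, f y ^ p.toReal ∂(volume.restrict s)) ^ (1 / p.toReal)
        = (K ^ p.toReal) ^ (1 / p.toReal) *
            (∫⁻ y, f y ^ p.toReal ∂(volume.restrict s)) ^ (1 / p.toReal) := by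
          rw [← ENNReal.rpow_mul, mul_one_div_cancel hpt.ne', ENNReal.rpow_one]
      _ = (K ^ p.toReal * ∫⁻ y, f y ^ p.toReal ∂(volume.restrict s)) ^ (1 / p.toReal) := by
          rw [ENNReal.mul_rpow_of_nonneg _ _ (by positivity)]
      _ = (∫⁻ y, (K * f y) ^ p.toReal ∂(volume.restrict s)) ^ (1 / p.toReal) := by
          rw [← lintegral_const_mul' _ _ (ENNReal.rpow_ne_top_of_nonneg hpt.le hK)]
          congr 1
          refine lintegral_congr fun y => ?_
          rw [ENNReal.mul_rpow_of_nonneg _ _ hpt.le]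
      _ ≤ (∫⁻ y, g y ^ p.toReal ∂(volume.restrict s)) ^ (1 / p.toReal) := by
          refine ENNReal.rpow_le_rpow ?_ (by positivity)
          refine lintegral_mono_ae ?_
          rw [ae_restrict_iff' hs]
          exact Filter.Eventually.of_forall fun y hy =>
            ENNReal.rpow_le_rpow (h y hy) hpt.le
      _ ≤ (∫⁻ y, g y ^ p.toReal ∂volume) ^ (1 / p.toReal) := by
          refine ENNReal.rpow_le_rpow ?_ (by positivity)
          exact lintegral_mono' Measure.restrict_le_self le_rfl

/-- if `δ̃ < α̃ − n`, any pair `(v,w) ∈ H(r, α̃, δ̃)` is trivial: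
`v = 0` a.e. or `w = ∞` a.e. -/
theorem statement7 (n m : ℕ) (α δ δt αt : ℝ) (r r' : ℝ≥0∞)
    (hn : 1 ≤ n) (hα0 : 0 ≤ α) (hαn : α < (n : ℝ)) (hδ0 : 0 < δ) (hδ1 : δ < 1)
    (hmδ : (m : ℝ) * δ < (n : ℝ) - α) (hαt : αt = (m : ℝ) * δ + α)
    (hr : 1 ≤ r) (hconj : r⁻¹ + r'⁻¹ = 1)
    (hδt : δt < αt - (n : ℝ))
    (v w : E n → ℝ≥0∞) (hvm : Measurable v) (hwm : Measurable w)
    (C : ℝ≥0) (hH : Hclass n r' αt δ δt v w (C : ℝ≥0∞)) :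
        (∀ᵐ x ∂(volume : Measure (E n)), v x = 0) ∨
      (∀ᵐ x ∂(volume : Measure (E n)), w x = ∞) := by
  by_contra hcon
  push_neg at hcon
  obtain ⟨hv, hw⟩ := hcon
  -- basic numerology
  have hn0 : (0:ℝ) < (n:ℝ) := by exact_mod_cast hn
  have hαtn : αt < (n:ℝ) := by rw [hαt]; linarith
  set s : ℝ := (n:ℝ) - αt + δ with hs_def
  have hs : 0 < s := by simp only [hs_def]; linarith
  set e : ℝ := αt - (n:ℝ) - δt with he_def
  have he : 0 < e := by simp only [he_def]; linarith
  have hq : 0 < (δ - δt) / (n:ℝ) := by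
    apply div_pos _ hn0
    linarith
  -- conjugate exponent
  have hr'1 : 1 ≤ r' := by
    rw [← ENNReal.inv_le_one]
    calc r'⁻¹ ≤ r⁻¹ + r'⁻¹ := le_add_self
      _ = 1 := hconj
  -- nontriviality and ball volumes
  haveI : Nonempty (Fin n) := Fin.pos_iff_nonempty.1 hn
  haveI : Nontrivial (E n) := by
    refine ⟨0, EuclideanSpace.single ⟨0, hn⟩ 1, fun hc => ?_⟩
    have := congrArg (fun f => f ⟨0, hn⟩) hc
    simp at this
  set V1 : ℝ≥0∞ := volume (ball (0 : E n) 1) with hV1_def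
  have hV1pos : 0 < V1 := measure_ball_pos _ _ one_pos
  have hV1top : V1 ≠ ∞ := measure_ball_lt_top.ne
  have hvol : ∀ R : ℝ, 0 ≤ R →
      volume (ball (0 : E n) R) = ENNReal.ofReal R ^ (n:ℝ) * V1 := by
    intro R hR
    rw [Measure.addHaar_ball volume (0 : E n) hR]
    congr 1
    rw [ENNReal.ofReal_pow hR, ← ENNReal.rpow_natCast]
    congr 1
    simp [finrank_euclideanSpace]
  -- the sets of non-triviality
  set Sw : Set (E n) := {x | w x ≠ ∞} with hSw_def
  have hSwm : MeasurableSet Sw := (hwm (measurableSet_singleton ∞)).compl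
  have hSw0 : volume Sw ≠ 0 := by
    intro h0
    exact hw (by rw [ae_iff]; simpa only [not_not] using h0)
  obtain ⟨k0, hk0⟩ := exists_ball_inter Sw hSw0
  set Sv : Set (E n) := {x | v x ≠ 0} with hSv_def
  have hSvm : MeasurableSet Sv := (hvm (measurableSet_singleton 0)).compl
  have hSv0 : volume Sv ≠ 0 := by
    intro h0
    exact hv (by rw [ae_iff]; simpa only [not_not] using h0)
  obtain ⟨k1, hk1⟩ := exists_ball_inter Sv hSv0
  -- the two positive quantities
  set ε : ℝ≥0∞ := essSup (fun y => (w y)⁻¹) (volume.restrict (ball (0 : E n) k0)) with hε_def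
  have hεpos : 0 < ε := by
    rw [pos_iff_ne_zero]
    intro h0
    apply hk0
    have hae : ∀ᵐ y ∂(volume.restrict (ball (0 : E n) k0)), w y = ∞ := by
      filter_upwards [ae_le_essSup (fun y => (w y)⁻¹)] with y hy
      rw [← hε_def, h0, le_zero_iff, ENNReal.inv_eq_zero] at hy
      exact hy
    have := (ae_iff.1 hae)
    rw [Measure.restrict_apply' (measurableSet_ball)] at this
    simpa [hSw_def] using this
  set M : ℝ≥0∞ := eN r' v (volume.restrict (ball (0 : E n) k1)) with hM_def
  have hMpos : 0 < M := by
    refine eN_pos r' hr'1 v _ hvm ?_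
    intro hae
    apply hk1
    have := (ae_iff.1 hae)
    rw [Measure.restrict_apply' (measurableSet_ball)] at this
    simpa [hSv_def] using this
  -- constants
  set c1 : ℝ≥0∞ := V1 ^ ((1:ℝ)/(n:ℝ)) + 1 with hc1_def
  have hc1pos : 0 < c1 := by
    rw [hc1_def]; exact lt_of_lt_of_le zero_lt_one le_add_self
  have hc1top : c1 ≠ ∞ := by
    simp only [hc1_def]
    exact ENNReal.add_ne_top.2 ⟨(ENNReal.rpow_lt_top_of_nonneg (by positivity) hV1top).ne,
      ENNReal.one_ne_top⟩
  set D : ℝ≥0∞ := ε * V1 ^ ((δ - δt) / (n:ℝ)) * c1 ^ (-s) * M with hD_def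
  have hDpos : 0 < D := by
    have h1 : 0 < V1 ^ ((δ - δt) / (n:ℝ)) := ENNReal.rpow_pos hV1pos hV1top
    have h2 : 0 < c1 ^ (-s) := ENNReal.rpow_pos hc1pos hc1top
    simp only [hD_def]
    exact ENNReal.mul_pos (ENNReal.mul_pos (ENNReal.mul_pos hεpos.ne' h1.ne').ne' h2.ne').ne'
      hMpos.ne'
  -- the key inequality
  have key : ∀ R : ℝ, (k0:ℝ) ≤ R → (k1:ℝ) ≤ R → 1 ≤ R →
      D * ENNReal.ofReal R ^ e ≤ (C : ℝ≥0∞) := by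
    intro R hRk0 hRk1 hR1
    have hR0 : (0:ℝ) < R := lt_of_lt_of_le one_pos hR1
    set x : ℝ≥0∞ := ENNReal.ofReal R with hx_def
    have hx0 : x ≠ 0 := by
      simp only [hx_def, ne_eq, ENNReal.ofReal_eq_zero, not_le]
      exact hR0
    have hxtop : x ≠ ∞ := ENNReal.ofReal_ne_top
    -- factor 1
    have hf1 : ε ≤ essSup (fun y => (w y)⁻¹) (volume.restrict (ball (0 : E n) R)) := by
      refine essSup_mono_measure' (Measure.restrict_mono (ball_subset_ball ?_) le_rfl)
      exact hRk0
    -- factor 2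
    have hf2 : volume (ball (0 : E n) R) ^ ((δ - δt)/(n:ℝ)) = x ^ (δ - δt) * V1 ^ ((δ - δt) / (n:ℝ)) := by
      rw [hvol R hR0.le, ENNReal.mul_rpow_of_nonneg _ _ hq.le, ← ENNReal.rpow_mul]
      congr 2
      field_simp
    -- factor 3
    have hballvol : volume (ball (0 : E n) R) ^ ((1:ℝ)/(n:ℝ)) = x * V1 ^ ((1:ℝ)/(n:ℝ)) := by
      rw [hvol R hR0.le, ENNReal.mul_rpow_of_nonneg _ _ (by positivity), ← ENNReal.rpow_mul,
        mul_one_div_cancel hn0.ne', ENNReal.rpow_one]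
    have hf3 : (x * c1) ^ (-s) * M ≤ eN r'
        (fun y => v y * (volume (ball (0 : E n) R) ^ ((1:ℝ)/(n:ℝ)) +
          ENNReal.ofReal (dist (0 : E n) y)) ^ (-((n:ℝ) - αt + δ))) volume := by
      refine eN_lower r' hr'1 _ ?_ v _ _ measurableSet_ball hvm ?_
      · rw [ENNReal.rpow_neg, ENNReal.inv_ne_top]
        exact (ENNReal.rpow_pos (ENNReal.mul_pos hx0 hc1pos.ne') (by
          exact ENNReal.mul_ne_top hxtop hc1top)).ne'
      · intro y hy
        rw [mul_comm]
        refine mul_le_mul_of_nonneg_left ?_ (by positivity)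
        have hbase : volume (ball (0 : E n) R) ^ ((1:ℝ)/(n:ℝ)) +
            ENNReal.ofReal (dist (0 : E n) y) ≤ x * c1 := by
          rw [hballvol, hc1_def, mul_add, mul_one]
          refine add_le_add le_rfl ?_
          rw [hx_def]
          apply ENNReal.ofReal_le_ofReal
          rw [dist_comm]
          exact le_trans (le_of_lt (mem_ball.1 hy)) hRk1
        have : -((n:ℝ) - αt + δ) = -s := by rw [hs_def]
        rw [this, ENNReal.rpow_neg, ENNReal.rpow_neg]
        exact ENNReal.inv_le_inv.2 (ENNReal.rpow_le_rpow hbase hs.le)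
    -- combine
    have hcomb := hH 0 R hR0
    have hmain : ε * (x ^ (δ - δt) * V1 ^ ((δ - δt) / (n:ℝ))) * ((x * c1) ^ (-s) * M) ≤ (C : ℝ≥0∞) := by
      refine le_trans ?_ hcomb
      rw [hf2]
      exact mul_le_mul' (mul_le_mul' hf1 le_rfl) hf3
    refine le_trans (le_of_eq ?_) hmain
    rw [ENNReal.mul_rpow_of_ne_top hxtop hc1top]
    have hxe : x ^ e = x ^ (δ - δt) * x ^ (-s) := by
      rw [← ENNReal.rpow_add _ _ hx0 hxtop]
      congr 1
      rw [he_def, hs_def]; ring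
    rw [hD_def, hxe]
    ring
  -- step A : D is finite
  have hDC : D ≤ (C : ℝ≥0∞) := by
    have h1 := key (max (max (k0:ℝ) (k1:ℝ)) 1) (le_max_of_le_left (le_max_left _ _))
      (le_max_of_le_left (le_max_right _ _)) (le_max_right _ _)
    refine le_trans ?_ h1
    conv_lhs => rw [← mul_one D]
    refine mul_le_mul' le_rfl ?_
    have hx1 : (1:ℝ≥0∞) ≤ ENNReal.ofReal (max (max (k0:ℝ) (k1:ℝ)) 1) := by
      rw [← ENNReal.ofReal_one]
      exact ENNReal.ofReal_le_ofReal (le_max_right _ _)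
    calc (1:ℝ≥0∞) = 1 ^ e := (ENNReal.one_rpow e).symm
      _ ≤ _ := ENNReal.rpow_le_rpow hx1 he.le
  have hDtop : D ≠ ∞ := (lt_of_le_of_lt hDC ENNReal.coe_lt_top).ne
  -- step B : contradiction with a large R
  set T : ℝ≥0∞ := ((C : ℝ≥0∞) / D) ^ e⁻¹ with hT_def
  have hTtop : T ≠ ∞ := by
    refine (ENNReal.rpow_lt_top_of_nonneg (by positivity) ?_).ne
    exact (ENNReal.div_lt_top ENNReal.coe_ne_top hDpos.ne').ne
  set R : ℝ := max (max (max (k0:ℝ) (k1:ℝ)) 1) (T.toReal + 1) with hR_def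
  have hkey := key R (le_trans (le_max_of_le_left (le_max_left _ _)) (le_max_left _ _))
    (le_trans (le_max_of_le_left (le_max_right _ _)) (le_max_left _ _))
    (le_trans (le_max_right _ _) (le_max_left _ _))
  have hTx : T < ENNReal.ofReal R := by
    calc T = ENNReal.ofReal T.toReal := (ENNReal.ofReal_toReal hTtop).symm
      _ < ENNReal.ofReal (T.toReal + 1) := by
          rw [ENNReal.ofReal_lt_ofReal_iff (by positivity)]
          linarith
      _ ≤ ENNReal.ofReal R := ENNReal.ofReal_le_ofReal (le_max_right _ _)
  have hCD : (C : ℝ≥0∞) / D < ENNReal.ofReal R ^ e := by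
    calc (C : ℝ≥0∞) / D = T ^ e := (ENNReal.rpow_inv_rpow he.ne' _).symm
      _ < ENNReal.ofReal R ^ e := ENNReal.rpow_lt_rpow hTx he
  have : (C : ℝ≥0∞) < D * ENNReal.ofReal R ^ e := by
    calc (C : ℝ≥0∞) = D * ((C : ℝ≥0∞) / D) := (ENNReal.mul_div_cancel hDpos.ne' hDtop).symm
      _ < D * ENNReal.ofReal R ^ e := (ENNReal.mul_lt_mul_iff_right hDpos.ne' hDtop).2 hCD
  exact absurd hkey (not_le.2 this)
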